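/- For a local ring R, M₂(R) is strongly clean if and only if for every A ∈ M₂(R), either A is invertible, or I - A is invertible, or A is similar to a diagonal matrix. -/
import Mathlib

/-- An element of a ring is strongly clean if it is the sum of an idempotent and a unit
that commute with each other. -/
def IsStronglyClean {S : Type*} [Ring S] (a : S) : Prop :=
  ∃ e u : S, IsIdempotentElem e ∧ IsUnit u ∧ a = e + u ∧ e * u = u * e

open Matrix

section Aux

variable {R : Type*} [Ring R]

lemma my_unit_or_unit [IsLocalRing R] (a : R) : IsUnit a ∨ IsUnit (1 - a) :=
  IsLocalRing.isUnit_or_isUnit_of_add_one (by abel)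

lemma my_idem_zero_or_one [IsLocalRing R] {e : R} (he : e * e = e) : e = 0 ∨ e = 1 := by
  rcases my_unit_or_unit e with h | h
  · right
    obtain ⟨u, hu⟩ := h
    have h3 : ↑u * (1 - e) = 0 := by rw [hu, mul_sub, mul_one, he, sub_self]
    have h4 := congrArg ((↑u⁻¹ : R) * ·) h3
    simp [← mul_assoc] at h4
    rw [sub_eq_zero] at h4
    exact h4.symm
  · left
    obtain ⟨u, hu⟩ := h
    have h3 : e * ↑u = 0 := by rw [hu, mul_sub, mul_one, he, sub_self]
    have h4 := congrArg (· * (↑u⁻¹ : R)) h3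
    simpa [mul_assoc] using h4

lemma conj_mul_conj {M : Type*} [Monoid M] (P : Mˣ) (X Y : M) :
    (↑P * X * ↑P⁻¹) * (↑P * Y * ↑P⁻¹) = ↑P * (X * Y) * ↑P⁻¹ := by
  simp [mul_assoc]

lemma inv_conj_conj {M : Type*} [Monoid M] (P : Mˣ) (X : M) :
    (↑P⁻¹ : M) * (↑P * X * ↑P⁻¹) * ↑P = X := by
  simp [mul_assoc]

lemma conj_inv_conj {M : Type*} [Monoid M] (P : Mˣ) (X : M) :
    (↑P : M) * (↑P⁻¹ * X * ↑P) * ↑P⁻¹ = X := by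
  simp [mul_assoc]

/-- Key lemma: an idempotent 2×2 matrix over a local ring whose (0,0) entry is a unit,
and which is not 1, is similar to diag(1,0). -/
lemma key_lemma [IsLocalRing R] (E : Matrix (Fin 2) (Fin 2) R) (hE : E * E = E)
    (hE1 : E ≠ 1) (ha : IsUnit (E 0 0)) :
    ∃ P : (Matrix (Fin 2) (Fin 2) R)ˣ,
      E = P.val * Matrix.diagonal ![1, 0] * (P⁻¹).val := by
  obtain ⟨u, hu⟩ := ha
  set a := E 0 0 with haa
  set b := E 0 1 with hbb
  set c := E 1 0 with hcc
  set d := E 1 1 with hdd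
  set i : R := ↑u⁻¹ with hii
  have hia : i * a = 1 := by rw [hii, ← hu]; exact u.inv_mul
  have hai : a * i = 1 := by rw [hii, ← hu]; exact u.mul_inv
  have rel : ∀ k l, E k 0 * E 0 l + E k 1 * E 1 l = E k l := by
    intro k l
    have := congrFun (congrFun hE k) l
    simpa [Matrix.mul_apply, Fin.sum_univ_two] using this
  have r1 : a * a + b * c = a := rel 0 0
  have r2 : a * b + b * d = b := rel 0 1
  have r3 : c * a + d * c = c := rel 1 0
  have r4 : c * b + d * d = d := rel 1 1
  have hbc : b * c = a - a * a := by rw [eq_sub_iff_add_eq']; exact r1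
  have hab : a * b = b - b * d := by rw [eq_sub_iff_add_eq]; exact r2
  have hca : c * a = c - d * c := by rw [eq_sub_iff_add_eq]; exact r3
  have hcb : c * b = d - d * d := by rw [eq_sub_iff_add_eq', add_comm]; exact r4
  have hbd : b * d = b - a * b := by rw [hab, sub_sub_cancel]
  have hdc : d * c = c - c * a := by rw [hca, sub_sub_cancel]
  have hiab : i * (a * b) = b := by rw [← mul_assoc, hia, one_mul]
  have hibc : i * (b * c) = 1 - a := by
    rw [hbc, mul_sub, ← mul_assoc, hia, one_mul]
  have hibd : i * (b * d) = i * b - b := by rw [hbd, mul_sub, hiab]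
  have hcai : c * a * i = c := by rw [mul_assoc, hai, mul_one]
  have hbci : b * (c * i) = 1 - a := by
    rw [← mul_assoc, hbc, sub_mul, mul_assoc a a i, hai, mul_one]
  have h1dci : (1 - d) * (c * i) = c := by
    rw [← mul_assoc, sub_mul, one_mul, ← hca, mul_assoc, hai, mul_one]
  -- the pivot s
  have hx2 : (c * i * b) * (c * i * b) = c * i * b - (d - d * d) := by
    calc (c * i * b) * (c * i * b) = c * (i * (b * c)) * (i * b) := by noncomm_ring
      _ = c * (1 - a) * (i * b) := by rw [hibc]
      _ = c * i * b - c * a * i * b := by noncomm_ring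
      _ = c * i * b - c * b := by rw [hcai]
      _ = c * i * b - (d - d * d) := by rw [hcb]
  have hx1d : (c * i * b) * (1 - d) = d - d * d := by
    calc (c * i * b) * (1 - d) = c * i * b - c * (i * (b * d)) := by noncomm_ring
      _ = c * i * b - c * (i * b - b) := by rw [hibd]
      _ = c * b := by noncomm_ring
      _ = d - d * d := hcb
  have h1dx : (1 - d) * (c * i * b) = d - d * d := by
    calc (1 - d) * (c * i * b) = c * i * b - (d * c) * (i * b) := by noncomm_ring
      _ = c * i * b - (c - c * a) * (i * b) := by rw [hdc]
      _ = c * a * i * b := by noncomm_ring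
      _ = c * b := by rw [hcai]
      _ = d - d * d := hcb
  have hs2 : (c * i * b + (1 - d)) * (c * i * b + (1 - d)) = c * i * b + (1 - d) := by
    have expand : (c * i * b + (1 - d)) * (c * i * b + (1 - d)) =
        (c * i * b) * (c * i * b) + (c * i * b) * (1 - d) + (1 - d) * (c * i * b)
          + (1 - d) * (1 - d) := by noncomm_ring
    rw [expand, hx2, hx1d, h1dx]
    noncomm_ring
  have hs : c * i * b + (1 - d) = 1 := by
    rcases my_idem_zero_or_one hs2 with hs0 | hs1
    · exfalso
      -- s = 0 forces E = 1, contradiction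
      have hsd : (c * i * b + (1 - d)) * (1 - d) = 1 - d := by
        rw [add_mul, hx1d]
        noncomm_ring
      rw [hs0, zero_mul] at hsd
      have hd1 : d = 1 := by
        have := sub_eq_zero.mp hsd.symm
        exact this.symm
      have hab0 : a * b = 0 := by rw [hab, hd1, mul_one, sub_self]
      have hb0 : b = 0 := by
        have := hiab
        rw [hab0, mul_zero] at this
        exact this.symm
      have ha2 : a * a = a := by
        have := r1
        rw [hb0, zero_mul, add_zero] at this
        exact this
      have ha1 : a = 1 := by
        have h5 : i * (a * a) = i * a := congrArg (i * ·) ha2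
        rw [← mul_assoc, hia, one_mul] at h5
        exact h5
      have hc0 : c = 0 := by
        have := r3
        rw [ha1, hd1, mul_one, one_mul] at this
        -- c + c = c
        have h6 : c + c - c = c - c := by rw [this, sub_self]
        simpa using h6
      apply hE1
      rw [Matrix.eta_fin_two E, ← haa, ← hbb, ← hcc, ← hdd, ha1, hb0, hc0, hd1,
        Matrix.one_fin_two]
    · exact hs1
  -- now build P and its inverse Q
  set P : Matrix (Fin 2) (Fin 2) R := !![a, -b; c, 1 - d] with hP
  set Q : Matrix (Fin 2) (Fin 2) R := !![1, i * b; -(c * i), 1] with hQ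
  have hPQ : P * Q = 1 := by
    rw [hP, hQ]
    ext k l
    fin_cases k <;> fin_cases l <;>
      simp [Matrix.mul_apply, Fin.sum_univ_two, Matrix.one_apply]
    · rw [hbci]; abel
    · rw [← mul_assoc, hai, one_mul]; abel
    · rw [h1dci]; abel
    · rw [← mul_assoc]; exact hs
  have hQP : Q * P = 1 := by
    rw [hP, hQ]
    ext k l
    fin_cases k <;> fin_cases l <;>
      simp [Matrix.mul_apply, Fin.sum_univ_two, Matrix.one_apply]
    · rw [mul_assoc, hibc]; abel
    · rw [mul_assoc, mul_sub, mul_one, ← hab, hiab]; abel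
    · rw [mul_assoc, hia, mul_one]; abel
    · exact hs
  have hEP : E * P = P * Matrix.diagonal ![1, 0] := by
    have hD : (Matrix.diagonal ![(1:R), 0]) = !![1, 0; 0, 0] := by
      ext k l; fin_cases k <;> fin_cases l <;> simp [Matrix.diagonal]
    rw [hD, hP, Matrix.eta_fin_two E, ← haa, ← hbb, ← hcc, ← hdd]
    ext k l
    fin_cases k <;> fin_cases l <;>
      simp [Matrix.mul_apply, Fin.sum_univ_two]
    · exact r1
    · rw [mul_sub, mul_one, hab]; abel
    · exact r3
    · rw [mul_sub, mul_one, hcb]; abel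
  refine ⟨⟨P, Q, hPQ, hQP⟩, ?_⟩
  have hinv : ((⟨P, Q, hPQ, hQP⟩ : (Matrix (Fin 2) (Fin 2) R)ˣ)⁻¹).val = Q := rfl
  rw [hinv]
  show E = P * Matrix.diagonal ![1, 0] * Q
  calc E = E * (P * Q) := by rw [hPQ, mul_one]
    _ = (E * P) * Q := by rw [mul_assoc]
    _ = P * Matrix.diagonal ![1, 0] * Q := by rw [hEP]

end Aux

section Rest

variable {R : Type*} [Ring R]

lemma idem_similar_diag [IsLocalRing R] (E : Matrix (Fin 2) (Fin 2) R) (hE : E * E = E)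
    (h0 : E ≠ 0) (h1 : E ≠ 1) :
    ∃ (P : (Matrix (Fin 2) (Fin 2) R)ˣ) (v : Fin 2 → R),
      (v = ![1, 0] ∨ v = ![0, 1]) ∧ E = P.val * Matrix.diagonal v * (P⁻¹).val := by
  rcases my_unit_or_unit (E 0 0) with h | h
  · obtain ⟨P, hP⟩ := key_lemma E hE h1 h
    exact ⟨P, ![1, 0], Or.inl rfl, hP⟩
  · -- apply the key lemma to 1 - E
    have hF : (1 - E) * (1 - E) = 1 - E := by
      have expand : (1 - E) * (1 - E) = 1 - E - E + E * E := by noncomm_ring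
      rw [expand, hE]; abel
    have hF1 : (1 : Matrix (Fin 2) (Fin 2) R) - E ≠ 1 := by
      intro hc
      exact h0 (by simpa [sub_eq_self] using hc)
    have hFa : IsUnit ((1 - E) 0 0) := by
      have : (1 - E) 0 0 = 1 - E 0 0 := by
        simp [Matrix.sub_apply, Matrix.one_apply]
      rwa [this]
    obtain ⟨P, hP⟩ := key_lemma (1 - E) hF hF1 hFa
    refine ⟨P, ![0, 1], Or.inr rfl, ?_⟩
    have hD : Matrix.diagonal ![(0 : R), 1] = 1 - Matrix.diagonal ![1, 0] := by
      ext k l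
      fin_cases k <;> fin_cases l <;> simp [Matrix.diagonal, Matrix.one_apply]
    rw [hD]
    have : E = 1 - (P.val * Matrix.diagonal ![1, 0] * (P⁻¹).val) := by
      rw [← hP]; abel
    rw [this, mul_sub, mul_one, sub_mul, Units.mul_inv]

lemma offdiag_zero (v : Fin 2 → R) (hv : v = ![1, 0] ∨ v = ![0, 1])
    (V : Matrix (Fin 2) (Fin 2) R) (h : V * Matrix.diagonal v = Matrix.diagonal v * V) :
    V 0 1 = 0 ∧ V 1 0 = 0 := by
  have h01 := congrFun (congrFun h 0) 1
  have h10 := congrFun (congrFun h 1) 0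
  rw [Matrix.mul_diagonal, Matrix.diagonal_mul] at h01 h10
  rcases hv with rfl | rfl
  · constructor
    · simpa using h01.symm
    · simpa using h10
  · constructor
    · simpa using h01
    · simpa using h10.symm

end Rest

/-- For a local ring `R`, `M₂(R)` is strongly clean iff every `A ∈ M₂(R)` is invertible,
or `I - A` is invertible, or `A` is similar to a diagonal matrix. -/
theorem matrix_two_stronglyClean_iff_diagonalizable {R : Type*} [Ring R] [IsLocalRing R] :
    (∀ A : Matrix (Fin 2) (Fin 2) R, IsStronglyClean A) ↔
      (∀ A : Matrix (Fin 2) (Fin 2) R, IsUnit A ∨ IsUnit (1 - A) ∨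
        ∃ (d : Fin 2 → R) (P : (Matrix (Fin 2) (Fin 2) R)ˣ),
          A = P.val * Matrix.diagonal d * (P⁻¹).val) := by
  constructor
  · intro h A
    obtain ⟨e, u, he, hu, hsum, hcomm⟩ := h A
    by_cases h0 : e = 0
    · left
      rw [hsum, h0, zero_add]
      exact hu
    by_cases h1 : e = 1
    · right; left
      have : 1 - A = -u := by rw [hsum, h1]; abel
      rw [this]
      exact hu.neg
    · right; right
      obtain ⟨P, v, hv, hEs⟩ := idem_similar_diag e he h0 h1
      set V : Matrix (Fin 2) (Fin 2) R := (P⁻¹).val * u * P.val with hV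
      have hD : (P⁻¹).val * e * P.val = Matrix.diagonal v := by
        rw [hEs]; exact inv_conj_conj P _
      have hcommD : V * Matrix.diagonal v = Matrix.diagonal v * V := by
        rw [← hD, hV]
        simp only [mul_assoc, Units.mul_inv_cancel_left]
        rw [show u * (e * P.val) = e * (u * P.val) by
          rw [← mul_assoc, ← mul_assoc, hcomm]]
      obtain ⟨hV01, hV10⟩ := offdiag_zero v hv V hcommD
      refine ⟨![v 0 + V 0 0, v 1 + V 1 1], P, ?_⟩
      have hB : Matrix.diagonal v + V = Matrix.diagonal ![v 0 + V 0 0, v 1 + V 1 1] := by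
        ext k l
        fin_cases k <;> fin_cases l <;>
          simp [Matrix.diagonal, Matrix.add_apply, hV01, hV10]
      rw [← hB, mul_add, add_mul]
      rw [hsum, hEs]
      congr 1
      rw [hV]
      exact (conj_inv_conj P u).symm
  · intro h A
    rcases h A with hA | hA | ⟨dv, P, hA⟩
    · exact ⟨0, A, IsIdempotentElem.zero, hA, (zero_add A).symm, by simp⟩
    · refine ⟨1, A - 1, IsIdempotentElem.one, ?_, by abel, by simp⟩
      rw [show A - 1 = -(1 - A) by abel]
      exact hA.neg
    · classical
      set ev : Fin 2 → R := fun k => if IsUnit (dv k) then 0 else 1 with hev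
      set uv : Fin 2 → R := fun k => dv k - ev k with huvdef
      have huv : ∀ k, IsUnit (uv k) := by
        intro k
        by_cases hk : IsUnit (dv k)
        · simp [huvdef, hev, hk]
        · have h2 : IsUnit (1 - dv k) := (my_unit_or_unit (dv k)).resolve_left hk
          have : uv k = -(1 - dv k) := by simp [huvdef, hev, hk]
          rw [this]
          exact h2.neg
      choose w hw using huv
      have hee : ∀ k, ev k * ev k = ev k := by
        intro k
        by_cases hk : IsUnit (dv k) <;> simp [hev, hk]
      refine ⟨P.val * Matrix.diagonal ev * (P⁻¹).val,
        P.val * Matrix.diagonal uv * (P⁻¹).val, ?_, ?_, ?_, ?_⟩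
      · show _ * _ = _
        rw [conj_mul_conj, Matrix.diagonal_mul_diagonal,
          show (fun i => ev i * ev i) = ev from funext hee]
      · have hdu : IsUnit (Matrix.diagonal uv) := by
          refine ⟨⟨Matrix.diagonal uv, Matrix.diagonal (fun k => ((w k)⁻¹ : Rˣ)), ?_, ?_⟩, rfl⟩
          · rw [Matrix.diagonal_mul_diagonal]
            have : (fun i => uv i * ((w i)⁻¹ : Rˣ)) = fun _ => (1 : R) := by
              funext k; rw [← hw k]; exact (w k).mul_inv
            rw [this, Matrix.diagonal_one]
          · rw [Matrix.diagonal_mul_diagonal]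
            have : (fun i => ((w i)⁻¹ : Rˣ) * uv i) = fun _ => (1 : R) := by
              funext k; rw [← hw k]; exact (w k).inv_mul
            rw [this, Matrix.diagonal_one]
        exact (P.isUnit.mul hdu).mul (P⁻¹).isUnit
      · rw [← add_mul, ← mul_add, Matrix.diagonal_add,
          show (fun i => ev i + uv i) = dv from funext fun k => by simp [huvdef], hA]
      · rw [conj_mul_conj, conj_mul_conj, Matrix.diagonal_mul_diagonal,
          Matrix.diagonal_mul_diagonal]
        congr 2
        funext k
        by_cases hk : IsUnit (dv k) <;> simp [hev, hk]
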